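/- Let f_1,…,f_N be a t-Pareto set for (F,R), and let f̂ be the empirical risk minimizer over {f_1,…,f_N} using n i.i.d. samples from Q with loss bounded in [0,1]. Then with probability at least 1−δ, R_Q(f̂) − inf_{f∈F} R_Q(f) ≤ ω̄(t) + sqrt(2 log(2N/δ)/n). -/

import Mathlib

open MeasureTheory Set

private lemma denom_pos {p : ℝ} (hp0 : 0 ≤ p) (hp1 : p ≤ 1) (s : ℝ) :
    0 < 1 - p + p * Real.exp s := by
  rcases le_total 0 s with h | h
  · nlinarith [Real.one_le_exp h]
  · nlinarith [Real.exp_pos s, Real.exp_le_one_iff.mpr h]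

private lemma hoeff_scalar {p : ℝ} (hp0 : 0 ≤ p) (hp1 : p ≤ 1) (s : ℝ) :
    1 - p + p * Real.exp s ≤ Real.exp (s * p + s ^ 2 / 8) := by
  set D : ℝ → ℝ := fun s => 1 - p + p * Real.exp s with hDdef
  have hD : ∀ s, 0 < D s := fun s => denom_pos hp0 hp1 s
  set g : ℝ → ℝ := fun s => p + s / 4 - p * Real.exp s / D s with hgdef
  set φ : ℝ → ℝ := fun s => s * p + s ^ 2 / 8 - Real.log (D s) with hφdef
  have hD' : ∀ s, HasDerivAt D (p * Real.exp s) s := by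
    intro s
    exact ((Real.hasDerivAt_exp s).const_mul p).const_add (1 - p)
  have hφ' : ∀ s, HasDerivAt φ (g s) s := by
    intro s
    have h1 : HasDerivAt (fun s : ℝ => s * p) p s := by
      simpa using (hasDerivAt_id s).mul_const p
    have h2 : HasDerivAt (fun s : ℝ => s ^ 2 / 8) (2 * s / 8) s := by
      simpa using (hasDerivAt_pow 2 s).div_const 8
    have h3 : HasDerivAt (fun s => Real.log (D s)) (p * Real.exp s / D s) s :=
      (hD' s).log (hD s).ne'
    have := (h1.add h2).sub h3
    refine this.congr_deriv ?_
    simp only [hgdef]; ring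
  have hg' : ∀ s, HasDerivAt g
      (1 / 4 - (p * Real.exp s * D s - p * Real.exp s * (p * Real.exp s)) / D s ^ 2) s := by
    intro s
    have h2 : HasDerivAt (fun s : ℝ => p + s / 4) (1 / 4) s := by
      simpa using ((hasDerivAt_id s).div_const 4).const_add p
    have h3 : HasDerivAt (fun s => p * Real.exp s / D s)
        ((p * Real.exp s * D s - p * Real.exp s * (p * Real.exp s)) / D s ^ 2) s :=
      ((Real.hasDerivAt_exp s).const_mul p).div (hD' s) (hD s).ne'
    exact h2.sub h3
  have hgmono : Monotone g := by
    apply monotone_of_deriv_nonneg (fun s => (hg' s).differentiableAt)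
    intro s
    rw [(hg' s).deriv]
    have hD2 : 0 < D s ^ 2 := pow_pos (hD s) 2
    rw [sub_nonneg, div_le_iff₀ hD2]
    have key : ∀ u d : ℝ, u * d - u * u ≤ 1 / 4 * d ^ 2 := by
      intro u d; nlinarith [sq_nonneg (d - 2 * u)]
    exact key (p * Real.exp s) (D s)
  have hg0 : g 0 = 0 := by
    have : D 0 = 1 := by simp [hDdef]
    simp [hgdef, this]
  have hφ0 : φ 0 = 0 := by
    have : D 0 = 1 := by simp [hDdef]
    simp [hφdef, this]
  have hφnn : ∀ s, 0 ≤ φ s := by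
    intro s
    rcases le_total 0 s with h | h
    · have hmono : MonotoneOn φ (Ici 0) := by
        apply monotoneOn_of_deriv_nonneg (convex_Ici 0)
          (fun x _ => (hφ' x).continuousAt.continuousWithinAt)
          (fun x _ => (hφ' x).differentiableAt.differentiableWithinAt)
        intro x hx
        rw [(hφ' x).deriv]
        rw [interior_Ici] at hx
        calc (0:ℝ) = g 0 := hg0.symm
          _ ≤ g x := hgmono hx.le
      have := hmono (self_mem_Ici) h h
      rw [hφ0] at this; exact this
    · have hanti : AntitoneOn φ (Iic 0) := by
        apply antitoneOn_of_deriv_nonpos (convex_Iic 0)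
          (fun x _ => (hφ' x).continuousAt.continuousWithinAt)
          (fun x _ => (hφ' x).differentiableAt.differentiableWithinAt)
        intro x hx
        rw [(hφ' x).deriv]
        rw [interior_Iic] at hx
        calc g x ≤ g 0 := hgmono hx.le
          _ = 0 := hg0
      have := hanti h (self_mem_Iic) h
      rw [hφ0] at this; exact this
    -- done
  have := hφnn s
  have hlog : Real.log (D s) ≤ s * p + s ^ 2 / 8 := by
    simp only [hφdef] at this; linarith
  exact (Real.log_le_iff_le_exp (hD s)).mp hlog

private lemma integrable_of_abs_le {Z : Type*} [MeasurableSpace Z] (Q : Measure Z)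
    [IsFiniteMeasure Q] {f : Z → ℝ} (hf : Measurable f) (C : ℝ) (h : ∀ z, |f z| ≤ C) :
    Integrable f Q :=
  (integrable_const C).mono' hf.aestronglyMeasurable (ae_of_all _ fun z => by simpa using h z)

private lemma hoeff_mgf {Z : Type*} [MeasurableSpace Z] (Q : Measure Z)
    [IsProbabilityMeasure Q] (g : Z → ℝ) (hg : Measurable g)
    (hb : ∀ z, g z ∈ Icc (0:ℝ) 1) (s : ℝ) :
    ∫ z, Real.exp (s * g z) ∂Q ≤ Real.exp (s * (∫ z, g z ∂Q) + s ^ 2 / 8) := by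
  set m := ∫ z, g z ∂Q with hm
  have hgint : Integrable g Q :=
    integrable_of_abs_le Q hg 1 (fun z => abs_le.mpr ⟨by linarith [(hb z).1], (hb z).2⟩)
  have hm0 : 0 ≤ m := integral_nonneg fun z => (hb z).1
  have hm1 : m ≤ 1 := by
    have := integral_mono hgint (integrable_const 1) (fun z => (hb z).2)
    simpa using this
  have hpt : ∀ z, Real.exp (s * g z) ≤ 1 - g z + g z * Real.exp s := by
    intro z
    have h := convexOn_exp.2 (mem_univ (0:ℝ)) (mem_univ s)
      (by linarith [(hb z).2] : (0:ℝ) ≤ 1 - g z) (hb z).1 (by ring)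
    simp only [smul_eq_mul, mul_zero, add_zero, zero_add, Real.exp_zero, mul_one] at h
    calc Real.exp (s * g z) = Real.exp (g z * s) := by rw [mul_comm]
      _ ≤ (1 - g z) * 1 + g z * Real.exp s := by simpa using h
      _ = 1 - g z + g z * Real.exp s := by ring
  have hint2 : Integrable (fun z => 1 - g z + g z * Real.exp s) Q :=
    ((integrable_const 1).sub hgint).add (hgint.mul_const _)
  have hint1 : Integrable (fun z => Real.exp (s * g z)) Q := by
    apply integrable_of_abs_le Q ((hg.const_mul s).exp) (Real.exp |s|)
    intro z
    rw [abs_of_pos (Real.exp_pos _), Real.exp_le_exp]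
    calc s * g z ≤ |s * g z| := le_abs_self _
      _ = |s| * |g z| := abs_mul s (g z)
      _ ≤ |s| * 1 := by
          apply mul_le_mul_of_nonneg_left _ (abs_nonneg s)
          rw [abs_of_nonneg (hb z).1]; exact (hb z).2
      _ = |s| := mul_one _
  calc ∫ z, Real.exp (s * g z) ∂Q ≤ ∫ z, (1 - g z + g z * Real.exp s) ∂Q :=
        integral_mono hint1 hint2 hpt
    _ = 1 - m + m * Real.exp s := by
        have e1 : (fun z => 1 - g z + g z * Real.exp s)
            = (fun z => 1 + (Real.exp s - 1) * g z) := funext fun z => by ring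
        rw [e1, integral_add (integrable_const 1) (hgint.const_mul _),
          MeasureTheory.integral_const_mul, integral_const]
        simp only [measure_univ, probReal_univ, ENNReal.toReal_one, smul_eq_mul, one_mul, ← hm]
        ring
    _ ≤ Real.exp (s * m + s ^ 2 / 8) := hoeff_scalar hm0 hm1 s

private lemma hoeff_tail {Z : Type*} [MeasurableSpace Z] (Q : Measure Z)
    [IsProbabilityMeasure Q] {n : ℕ} (hn : 0 < n) (g : Z → ℝ) (hg : Measurable g)
    (hb : ∀ z, g z ∈ Icc (0:ℝ) 1) {a : ℝ} (ha : 0 ≤ a) :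
    (Measure.pi fun _ : Fin n => Q) {ω | (n:ℝ) * (∫ z, g z ∂Q) + a ≤ ∑ l, g (ω l)}
      ≤ ENNReal.ofReal (Real.exp (-(2 * a ^ 2 / n))) := by
  letI : MeasureSpace Z := ⟨Q⟩
  set μ : Measure (Fin n → Z) := Measure.pi fun _ : Fin n => Q with hμ
  haveI : IsProbabilityMeasure μ := by rw [hμ]; infer_instance
  set m := ∫ z, g z ∂Q with hm
  set s : ℝ := 4 * a / n with hs
  have hnR : (0:ℝ) < n := Nat.cast_pos.mpr hn
  have hs0 : 0 ≤ s := by positivity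
  set X : (Fin n → Z) → ℝ := fun ω => ∑ l, g (ω l) with hX
  have hXmeas : Measurable X :=
    Finset.univ.measurable_sum fun l _ => hg.comp (measurable_pi_apply l)
  have h_int : Integrable (fun ω => Real.exp (s * X ω)) μ := by
    apply integrable_of_abs_le μ ((hXmeas.const_mul s).exp) (Real.exp (s * n))
    intro ω
    rw [abs_of_pos (Real.exp_pos _), Real.exp_le_exp]
    apply mul_le_mul_of_nonneg_left _ hs0
    calc X ω ≤ ∑ _l : Fin n, (1:ℝ) := Finset.sum_le_sum fun l _ => (hb (ω l)).2
      _ = n := by simp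
  have key := ProbabilityTheory.measure_ge_le_exp_mul_mgf (μ := μ) (X := X)
    ((n:ℝ) * m + a) hs0 h_int
  have hmgf : ProbabilityTheory.mgf X μ s = (∫ z, Real.exp (s * g z) ∂Q) ^ n := by
    have h1 : ∀ ω : Fin n → Z, Real.exp (s * X ω) = ∏ l, Real.exp (s * g (ω l)) := by
      intro ω
      rw [hX, Finset.mul_sum, Real.exp_sum]
    have h2 := MeasureTheory.integral_fintype_prod_eq_pow (𝕜 := ℝ) (ι := Fin n) (μ := (volume : Measure Z))
      (fun z => Real.exp (s * g z))
    calc ProbabilityTheory.mgf X μ s = ∫ ω, Real.exp (s * X ω) ∂μ := rfl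
      _ = ∫ ω : Fin n → Z, ∏ l, Real.exp (s * g (ω l)) := by
          simp_rw [h1]; rfl
      _ = (∫ z, Real.exp (s * g z) ∂Q) ^ n := by
          rw [volume_pi, h2]; simp only [Fintype.card_fin]; rfl
  have hint_nonneg : 0 ≤ ∫ z, Real.exp (s * g z) ∂Q :=
    integral_nonneg fun z => (Real.exp_pos _).le
  have hmgf_le : ProbabilityTheory.mgf X μ s ≤ Real.exp (s * m + s ^ 2 / 8) ^ n := by
    rw [hmgf]
    exact pow_le_pow_left₀ hint_nonneg (hoeff_mgf Q g hg hb s) n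
  have hbound : (μ {ω | (n:ℝ) * m + a ≤ X ω}).toReal ≤ Real.exp (-(2 * a ^ 2 / n)) := by
    calc (μ {ω | (n:ℝ) * m + a ≤ X ω}).toReal
        ≤ Real.exp (-s * ((n:ℝ) * m + a)) * ProbabilityTheory.mgf X μ s := key
      _ ≤ Real.exp (-s * ((n:ℝ) * m + a)) * Real.exp (s * m + s ^ 2 / 8) ^ n := by
          exact mul_le_mul_of_nonneg_left hmgf_le (Real.exp_pos _).le
      _ = Real.exp (-s * ((n:ℝ) * m + a) + n * (s * m + s ^ 2 / 8)) := by
          rw [← Real.exp_nat_mul, ← Real.exp_add]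
      _ = Real.exp (-(2 * a ^ 2 / n)) := by
          congr 1
          rw [hs]
          field_simp
          ring
  have hfin : μ {ω | (n:ℝ) * m + a ≤ X ω} ≠ ⊤ := measure_ne_top _ _
  calc μ {ω | (n:ℝ) * m + a ≤ X ω}
      ≤ ENNReal.ofReal (Real.exp (-(2 * a ^ 2 / n))) := by
        rw [← ENNReal.ofReal_toReal hfin]
        exact ENNReal.ofReal_le_ofReal hbound

/-- Excess-risk bound for the Pareto ERM. If `f_1, …, f_N` is a
`t`-Pareto set and `f̂` is the empirical risk minimizer over it based on `n` i.i.d.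
samples from `Q`, then with probability at least `1 − δ`,
`R_Q(f̂) − inf_F R_Q ≤ ω̄(t) + √(2 log(2N/δ)/n)`. -/
theorem pareto_erm_excess_risk_bound {F Z : Type*} [MeasurableSpace Z]
    {K N n : ℕ} (Q : Measure Z) [IsProbabilityMeasure Q]
    (ℓ : F → Z → ℝ) (hmeas : ∀ f, Measurable (ℓ f))
    (hb : ∀ f z, ℓ f z ∈ Icc (0:ℝ) 1)
    (R : F → Fin K → ℝ) (RQ : F → ℝ) (hRQ : ∀ f, RQ f = ∫ z, ℓ f z ∂Q)
    (t : ℝ) (ht : 0 ≤ t)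
    (fs : Fin N → F) (hcover : ∀ f : F, ∃ j, ∀ k, R (fs j) k ≤ R f k + t)
    (fstar : F) (hstar : ∀ f, RQ fstar ≤ RQ f)
    (hn : 0 < n) (hN : 0 < N)
    (δ : ℝ) (hδ : δ ∈ Ioo (0:ℝ) 1)
    (fhat : (Fin n → Z) → F)
    (herm : ∀ ω : Fin n → Z, ∃ j, fhat ω = fs j ∧
      ∀ i, ∑ l, ℓ (fhat ω) (ω l) ≤ ∑ l, ℓ (fs i) (ω l)) :
    ENNReal.ofReal (1 - δ) ≤
      (Measure.pi fun _ : Fin n => Q)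
        {ω | RQ (fhat ω) - RQ fstar ≤
          sSup {x : ℝ | ∃ f f' : F, (∀ k, R f k ≤ R f' k + t) ∧ x = RQ f - RQ f'} +
          Real.sqrt (2 * Real.log (2 * N / δ) / n)} := by
  set W := sSup {x : ℝ | ∃ f f' : F, (∀ k, R f k ≤ R f' k + t) ∧ x = RQ f - RQ f'} with hW
  set ε : ℝ := Real.sqrt (2 * Real.log (2 * N / δ) / n) with hε
  set μ : Measure (Fin n → Z) := Measure.pi fun _ : Fin n => Q with hμ
  haveI : IsProbabilityMeasure μ := by rw [hμ]; infer_instance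
  have hnR : (0:ℝ) < n := Nat.cast_pos.mpr hn
  have hNR : (0:ℝ) < N := Nat.cast_pos.mpr hN
  have hlog0 : 0 ≤ Real.log (2 * N / δ) := by
    apply Real.log_nonneg
    rw [le_div_iff₀ hδ.1]
    have h1N : (1:ℝ) ≤ N := Nat.one_le_cast.mpr hN
    nlinarith [hδ.2]
  have hε0 : 0 ≤ ε := Real.sqrt_nonneg _
  set a : ℝ := n * ε / 2 with ha
  have ha0 : 0 ≤ a := by positivity
  have hℓint : ∀ f, Integrable (ℓ f) Q := fun f =>
    integrable_of_abs_le Q (hmeas f) 1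
      (fun z => abs_le.mpr ⟨by linarith [(hb f z).1], (hb f z).2⟩)
  have hRQmem : ∀ f, RQ f ∈ Icc (0:ℝ) 1 := by
    intro f
    rw [hRQ]
    refine ⟨integral_nonneg fun z => (hb f z).1, ?_⟩
    have := integral_mono (hℓint f) (integrable_const 1) (fun z => (hb f z).2)
    simpa using this
  have hbdd : BddAbove {x : ℝ | ∃ f f' : F, (∀ k, R f k ≤ R f' k + t) ∧ x = RQ f - RQ f'} := by
    refine ⟨1, ?_⟩
    rintro x ⟨f, f', -, rfl⟩
    have h1 := hRQmem f; have h2 := hRQmem f'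
    rw [mem_Icc] at h1 h2
    linarith [h1.2, h2.1]
  obtain ⟨jstar, hjstar⟩ := hcover fstar
  have hWge : RQ (fs jstar) - RQ fstar ≤ W :=
    le_csSup hbdd ⟨fs jstar, fstar, hjstar, rfl⟩
  set S : Fin N → (Fin n → Z) → ℝ := fun j ω => ∑ l, ℓ (fs j) (ω l) with hS
  have hSmeas : ∀ j, Measurable (S j) := fun j =>
    Finset.univ.measurable_sum fun l _ => (hmeas (fs j)).comp (measurable_pi_apply l)
  set G : Set (Fin n → Z) := {ω | ∀ j, |S j ω - n * RQ (fs j)| ≤ a} with hG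
  have hGmeas : MeasurableSet G := by
    have : G = ⋂ j, {ω | |S j ω - n * RQ (fs j)| ≤ a} := by ext ω; simp [hG]
    rw [this]
    exact MeasurableSet.iInter fun j =>
      measurableSet_le ((hSmeas j).sub measurable_const).abs measurable_const
  set U : Fin N → Set (Fin n → Z) :=
    fun j => {ω | (n:ℝ) * (∫ z, ℓ (fs j) z ∂Q) + a ≤ ∑ l, ℓ (fs j) (ω l)} with hU
  set L : Fin N → Set (Fin n → Z) :=
    fun j => {ω | (n:ℝ) * (∫ z, (1 - ℓ (fs j) z) ∂Q) + a ≤ ∑ l, (1 - ℓ (fs j) (ω l))} with hL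
  have hUb : ∀ j, μ (U j) ≤ ENNReal.ofReal (Real.exp (-(2 * a ^ 2 / n))) := fun j =>
    hoeff_tail Q hn (ℓ (fs j)) (hmeas (fs j)) (hb (fs j)) ha0
  have hLb : ∀ j, μ (L j) ≤ ENNReal.ofReal (Real.exp (-(2 * a ^ 2 / n))) := fun j =>
    hoeff_tail Q hn (fun z => 1 - ℓ (fs j) z) (measurable_const.sub (hmeas (fs j)))
      (fun z => ⟨show (0:ℝ) ≤ 1 - ℓ (fs j) z by linarith [(hb (fs j) z).2],
        show (1:ℝ) - ℓ (fs j) z ≤ 1 by linarith [(hb (fs j) z).1]⟩) ha0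
  have hexp : Real.exp (-(2 * a ^ 2 / n)) = δ / (2 * N) := by
    have h2a : 2 * a ^ 2 / n = Real.log (2 * N / δ) := by
      have hsq' : (n:ℝ) * ε ^ 2 = 2 * Real.log (2 * N / δ) := by
        rw [hε, Real.sq_sqrt (by positivity)]
        field_simp
      rw [ha]
      field_simp
      linear_combination hsq'
    rw [h2a, Real.exp_neg, Real.exp_log (div_pos (by linarith) hδ.1), inv_div]
  have hintL : ∀ j, ∫ z, (1 - ℓ (fs j) z) ∂Q = 1 - RQ (fs j) := by
    intro j
    rw [integral_sub (integrable_const 1) (hℓint (fs j)), hRQ]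
    simp
  have hGc : Gᶜ ⊆ ⋃ j, (U j ∪ L j) := by
    intro ω hω
    simp only [hG, mem_compl_iff, mem_setOf_eq, not_forall, not_le] at hω
    obtain ⟨j, hj⟩ := hω
    refine mem_iUnion.mpr ⟨j, ?_⟩
    rcases le_or_gt 0 (S j ω - n * RQ (fs j)) with hd | hd
    · left
      rw [abs_of_nonneg hd] at hj
      show (n:ℝ) * (∫ z, ℓ (fs j) z ∂Q) + a ≤ ∑ l, ℓ (fs j) (ω l)
      rw [← hRQ]
      have : S j ω = ∑ l, ℓ (fs j) (ω l) := rfl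
      linarith [this ▸ hj]
    · right
      rw [abs_of_neg hd] at hj
      show (n:ℝ) * (∫ z, (1 - ℓ (fs j) z) ∂Q) + a ≤ ∑ l, (1 - ℓ (fs j) (ω l))
      rw [hintL j]
      have hsum : ∑ l, (1 - ℓ (fs j) (ω l)) = (n:ℝ) - S j ω := by
        rw [hS, Finset.sum_sub_distrib]
        simp
      rw [hsum]
      linarith
  have hμGc : μ Gᶜ ≤ ENNReal.ofReal δ := by
    calc μ Gᶜ ≤ μ (⋃ j, (U j ∪ L j)) := measure_mono hGc
      _ ≤ ∑ j, μ (U j ∪ L j) := measure_iUnion_fintype_le μ _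
      _ ≤ ∑ _j : Fin N, ENNReal.ofReal (δ / N) := by
          apply Finset.sum_le_sum
          intro j _
          calc μ (U j ∪ L j) ≤ μ (U j) + μ (L j) := measure_union_le _ _
            _ ≤ ENNReal.ofReal (Real.exp (-(2 * a ^ 2 / n)))
                + ENNReal.ofReal (Real.exp (-(2 * a ^ 2 / n))) := add_le_add (hUb j) (hLb j)
            _ = ENNReal.ofReal (δ / N) := by
                rw [hexp, ← ENNReal.ofReal_add (div_nonneg hδ.1.le (by positivity))
                  (div_nonneg hδ.1.le (by positivity))]
                congr 1
                field_simp [hNR.ne']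
                ring
      _ = (N : ENNReal) * ENNReal.ofReal (δ / N) := by
          simp [Finset.sum_const, Finset.card_univ, nsmul_eq_mul]
      _ = ENNReal.ofReal δ := by
          rw [← ENNReal.ofReal_natCast N, ← ENNReal.ofReal_mul (Nat.cast_nonneg N)]
          congr 1
          field_simp
  have hsub : G ⊆ {ω | RQ (fhat ω) - RQ fstar ≤ W + ε} := by
    intro ω hω
    obtain ⟨j, hjeq, hjmin⟩ := herm ω
    have h1 := abs_le.mp (hω j)
    have h2 := abs_le.mp (hω jstar)
    have h3 : S j ω ≤ S jstar ω := by
      have := hjmin jstar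
      rw [hjeq] at this
      exact this
    show RQ (fhat ω) - RQ fstar ≤ W + ε
    rw [hjeq]
    have hD : RQ (fs jstar) ≤ RQ fstar + W := by linarith
    have hmul : (n:ℝ) * (RQ (fs j) - RQ fstar) ≤ (n:ℝ) * (W + ε) := by
      nlinarith [mul_le_mul_of_nonneg_left hD hnR.le, h1.1, h2.2, h3, ha]
    have := (mul_le_mul_iff_right₀ hnR).mp hmul
    linarith
  calc ENNReal.ofReal (1 - δ) = 1 - ENNReal.ofReal δ := by
        rw [ENNReal.ofReal_sub 1 hδ.1.le, ENNReal.ofReal_one]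
    _ ≤ 1 - μ Gᶜ := tsub_le_tsub_left hμGc 1
    _ = μ G := by
        rw [← prob_compl_eq_one_sub hGmeas.compl, compl_compl]
    _ ≤ _ := measure_mono hsub
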